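/- Let X, Y, A, W, W' be jointly distributed finitely-valued random variables with H(W|X,Y) = 0, I(X:Y|W') = I(X:Y|W,A), and max{H(W|X,A), H(W|Y,A)} ≤ ρ. If moreover I(X:Y|W') ≥ λ·I(X:Y|W) for some λ ∈ [0,1], then H(W|A) ≤ I(X:Y|A) − λ·I(X:Y|W) + 2ρ. -/
import Mathlib


open scoped BigOperators

namespace PaperIngleton

open Classical in
/-- Probability of an event under a pmf `p` on a finite sample space. -/
noncomputable def prob {Ω : Type*} [Fintype Ω] (p : Ω → ℝ) (E : Ω → Prop) : ℝ :=
  ∑ ω, if E ω then p ω else 0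

/-- Shannon entropy of a finitely-valued random variable `X` under pmf `p`. -/
noncomputable def ent {Ω S : Type*} [Fintype Ω] [Fintype S] (p : Ω → ℝ) (X : Ω → S) : ℝ :=
  -∑ s : S, prob p (fun ω => X ω = s) * Real.log (prob p (fun ω => X ω = s))

/-- Conditional entropy `H(X|Y)`. -/
noncomputable def condEnt {Ω S T : Type*} [Fintype Ω] [Fintype S] [Fintype T]
    (p : Ω → ℝ) (X : Ω → S) (Y : Ω → T) : ℝ :=
  ent p (fun ω => (X ω, Y ω)) - ent p Y

/-- Mutual information `I(X:Y)`. -/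
noncomputable def mi {Ω S T : Type*} [Fintype Ω] [Fintype S] [Fintype T]
    (p : Ω → ℝ) (X : Ω → S) (Y : Ω → T) : ℝ :=
  ent p X + ent p Y - ent p (fun ω => (X ω, Y ω))

/-- Conditional mutual information `I(X:Y|Z)`. -/
noncomputable def cmi {Ω S T U : Type*} [Fintype Ω] [Fintype S] [Fintype T] [Fintype U]
    (p : Ω → ℝ) (X : Ω → S) (Y : Ω → T) (Z : Ω → U) : ℝ :=
  ent p (fun ω => (X ω, Z ω)) + ent p (fun ω => (Y ω, Z ω))
    - ent p (fun ω => (X ω, Y ω, Z ω)) - ent p Z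

end PaperIngleton

namespace PaperIngleton

open Classical

lemma prob_nonneg {Ω : Type*} [Fintype Ω] (p : Ω → ℝ) (hp : ∀ ω, 0 ≤ p ω)
    (E : Ω → Prop) : 0 ≤ prob p E := by
  unfold prob
  apply Finset.sum_nonneg
  intro ω _
  split <;> simp [hp ω]

/-- Entropy is invariant under injective relabeling. -/
lemma ent_comp_inj {Ω S T : Type*} [Fintype Ω] [Fintype S] [Fintype T]
    (p : Ω → ℝ) (g : Ω → S) (f : S → T) (hf : Function.Injective f) :
    ent p (fun ω => f (g ω)) = ent p g := by
  unfold ent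
  congr 1
  have h1 : ∀ s : S, prob p (fun ω => f (g ω) = f s) = prob p (fun ω => g ω = s) := by
    intro s
    unfold prob
    apply Finset.sum_congr rfl
    intro ω _
    simp [hf.eq_iff]
  have h2 : ∀ t : T, t ∉ Finset.univ.image f → prob p (fun ω => f (g ω) = t) = 0 := by
    intro t ht
    unfold prob
    apply Finset.sum_eq_zero
    intro ω _
    have : f (g ω) ≠ t := by
      intro h
      exact ht (Finset.mem_image.2 ⟨g ω, Finset.mem_univ _, h⟩)
    simp [this]
  rw [← Finset.sum_subset (Finset.subset_univ (Finset.univ.image f))]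
  · rw [Finset.sum_image (fun a _ b _ h => hf h)]
    apply Finset.sum_congr rfl
    intro s _
    rw [h1 s]
  · intro t _ ht
    rw [h2 t ht]
    simp

/-- Monotonicity of entropy: `H(Z) ≤ H(W, Z)`. -/
lemma ent_le_ent_pair {Ω V U : Type*} [Fintype Ω] [Fintype V] [Fintype U]
    (p : Ω → ℝ) (hp : ∀ ω, 0 ≤ p ω) (W : Ω → V) (Z : Ω → U) :
    ent p Z ≤ ent p (fun ω => (W ω, Z ω)) := by
  set q : V × U → ℝ := fun t => prob p (fun ω => (W ω, Z ω) = t) with hq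
  have hqn : ∀ t, 0 ≤ q t := fun t => prob_nonneg p hp _
  have hQ : ∀ z : U, prob p (fun ω => Z ω = z) = ∑ w : V, q (w, z) := by
    intro z
    simp only [hq]
    unfold prob
    rw [Finset.sum_comm]
    apply Finset.sum_congr rfl
    intro ω _
    simp [Prod.ext_iff, ite_and, Finset.sum_ite_eq]
  have key : ∀ z : U, ∀ w : V,
      q (w, z) * Real.log (q (w, z)) ≤ q (w, z) * Real.log (∑ w' : V, q (w', z)) := by
    intro z w
    rcases eq_or_lt_of_le (hqn (w, z)) with h | h
    · rw [← h]; simp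
    · apply mul_le_mul_of_nonneg_left _ (le_of_lt h)
      apply Real.log_le_log h
      exact Finset.single_le_sum (fun w' _ => hqn (w', z)) (Finset.mem_univ w)
  unfold ent
  rw [neg_le_neg_iff]
  calc ∑ t : V × U, q t * Real.log (q t)
      = ∑ w : V, ∑ z : U, q (w, z) * Real.log (q (w, z)) := by
        rw [Fintype.sum_prod_type]
    _ ≤ ∑ w : V, ∑ z : U, q (w, z) * Real.log (∑ w' : V, q (w', z)) := by
        apply Finset.sum_le_sum; intro w _
        apply Finset.sum_le_sum; intro z _
        exact key z w
    _ = ∑ z : U, (∑ w : V, q (w, z)) * Real.log (∑ w' : V, q (w', z)) := by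
        rw [Finset.sum_comm]
        apply Finset.sum_congr rfl
        intro z _
        rw [Finset.sum_mul]
    _ = ∑ z : U, prob p (fun ω => Z ω = z) * Real.log (prob p (fun ω => Z ω = z)) := by
        apply Finset.sum_congr rfl
        intro z _
        rw [hQ z]

theorem stmt18 {Ω S T U V V' : Type} [Fintype Ω] [Fintype S] [Fintype T] [Fintype U]
    [Fintype V] [Fintype V']
    (p : Ω → ℝ) (hp : ∀ ω, 0 ≤ p ω) (hp1 : ∑ ω, p ω = 1)
    (X : Ω → S) (Y : Ω → T) (A : Ω → U) (W : Ω → V) (W' : Ω → V')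
    (ρ l : ℝ) (hl0 : 0 ≤ l) (hl1 : l ≤ 1)
    (hWXY : condEnt p W (fun ω => (X ω, Y ω)) = 0)
    (hWW' : cmi p X Y W' = cmi p X Y (fun ω => (W ω, A ω)))
    (hρ : max (condEnt p W (fun ω => (X ω, A ω)))
              (condEnt p W (fun ω => (Y ω, A ω))) ≤ ρ)
    (hlam : l * cmi p X Y W ≤ cmi p X Y W') :
    condEnt p W A ≤ cmi p X Y A - l * cmi p X Y W + 2 * ρ := by
  have e1 : ent p (fun ω => (X ω, (W ω, A ω))) = ent p (fun ω => (W ω, (X ω, A ω))) := by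
    have := ent_comp_inj p (fun ω => (W ω, (X ω, A ω)))
      (fun t : V × (S × U) => (t.2.1, (t.1, t.2.2)))
      (by intro a b h; simp only [Prod.mk.injEq] at h; ext <;> tauto)
    simpa using this
  have e2 : ent p (fun ω => (Y ω, (W ω, A ω))) = ent p (fun ω => (W ω, (Y ω, A ω))) := by
    have := ent_comp_inj p (fun ω => (W ω, (Y ω, A ω)))
      (fun t : V × (T × U) => (t.2.1, (t.1, t.2.2)))
      (by intro a b h; simp only [Prod.mk.injEq] at h; ext <;> tauto)
    simpa using this
  have e3 : ent p (fun ω => (W ω, (X ω, Y ω, A ω)))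
      = ent p (fun ω => (X ω, Y ω, (W ω, A ω))) := by
    have := ent_comp_inj p (fun ω => (W ω, (X ω, Y ω, A ω)))
      (fun t : V × (S × T × U) => (t.2.1, t.2.2.1, (t.1, t.2.2.2)))
      (by intro a b h; simp only [Prod.mk.injEq] at h; ext <;> tauto)
    simpa using this.symm
  have m : ent p (fun ω => (X ω, Y ω, A ω)) ≤ ent p (fun ω => (X ω, Y ω, (W ω, A ω))) := by
    rw [← e3]
    exact ent_le_ent_pair p hp W (fun ω => (X ω, Y ω, A ω))
  have hρ1 : condEnt p W (fun ω => (X ω, A ω)) ≤ ρ := le_trans (le_max_left _ _) hρ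
  have hρ2 : condEnt p W (fun ω => (Y ω, A ω)) ≤ ρ := le_trans (le_max_right _ _) hρ
  have hl : l * cmi p X Y W ≤ cmi p X Y (fun ω => (W ω, A ω)) := hWW' ▸ hlam
  unfold condEnt cmi at *
  linarith

end PaperIngleton
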